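/- Let k be a commutative ring and let G=(V,E) be a finite graph. Then the chromatic symmetric function of G satisfies X_G = Σ_{F ⊆ E} (−1)^{|F|} p_{λ(V,F)}. -/

import Mathlib

open scoped Classical

noncomputable section

/-- The `n`-th power sum symmetric function `p_n = ∑_{j ≥ 1} x_j^n` (with `p_0 = 1`),
as a multivariate power series over `k` in variables indexed by positive integers. -/
def powerSum (k : Type*) [CommRing k] (n : ℕ) : MvPowerSeries ℕ+ k :=
  fun d => if ∃ j : ℕ+, d = Finsupp.single j n then 1 else 0

/-- The exponent vector of the monomial `x_f = ∏_{v ∈ V} x_{f v}` attached to a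
coloring `f : V → ℕ+`. -/
def colorMonomial {V : Type*} [Fintype V] (f : V → ℕ+) : ℕ+ →₀ ℕ :=
  ∑ v : V, Finsupp.single (f v) 1

/-- A coloring `f` of the graph `(V, E)` is proper if the endpoints of each edge
receive distinct colors. -/
def IsProperColoring {V Y : Type*} (E : Finset (Sym2 V)) (f : V → Y) : Prop :=
  ∀ u w : V, s(u, w) ∈ E → f u ≠ f w

/-- The chromatic symmetric function `X_G = ∑_{f proper coloring} x_f`, described via
its coefficients: the coefficient of the monomial with exponent vector `d` is the
number of proper colorings `f : V → ℕ+` whose monomial `x_f` has exponent vector `d`. -/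
def chromSym (k : Type*) [CommRing k] {V : Type*} [Fintype V]
    (E : Finset (Sym2 V)) : MvPowerSeries ℕ+ k :=
  fun d => (Set.ncard {f : V → ℕ+ | IsProperColoring E f ∧ colorMonomial f = d} : k)

/-- `p_{λ(V,F)}`: the product of `p_{|c|}` over all connected components `c` of the
graph `(V, F)`. -/
def pLambda (k : Type*) [CommRing k] {V : Type*} (F : Finset (Sym2 V)) :
    MvPowerSeries ℕ+ k :=
  ∏ᶠ c : (SimpleGraph.fromEdgeSet (↑F : Set (Sym2 V))).ConnectedComponent,
    powerSum k (Nat.card c.supp)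

set_option linter.unusedSectionVars false

section Aux
open Finset

variable {V : Type*} [Fintype V] [DecidableEq V]

/-- `f` is constant on every edge of `F`. -/
def ConstOn {Y : Type*} (F : Finset (Sym2 V)) (f : V → Y) : Prop :=
  ∀ u w : V, s(u, w) ∈ F → f u = f w

lemma constOn_of_mk_eq {Y : Type*} {F : Finset (Sym2 V)} {f : V → Y} (hf : ConstOn F f)
    {u w : V}
    (h : (SimpleGraph.fromEdgeSet (↑F : Set (Sym2 V))).connectedComponentMk u =
      (SimpleGraph.fromEdgeSet (↑F : Set (Sym2 V))).connectedComponentMk w) :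
    f u = f w := by
  rw [SimpleGraph.ConnectedComponent.eq] at h
  obtain ⟨p⟩ := h
  induction p with
  | nil => rfl
  | cons h p ih =>
    rw [SimpleGraph.fromEdgeSet_adj] at h
    exact (hf _ _ h.1).trans ih

lemma mk_out {G : SimpleGraph V} (c : G.ConnectedComponent) :
    G.connectedComponentMk (Quot.out c) = c :=
  Quot.out_eq c

lemma card_supp (G : SimpleGraph V) (c : G.ConnectedComponent) :
    Nat.card c.supp = (univ.filter (fun v => G.connectedComponentMk v = c)).card := by
  simp [SimpleGraph.ConnectedComponent.supp, Nat.card_coe_set_eq,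
    Set.ncard_eq_toFinset_card', Set.toFinset_setOf]

lemma supp_card_ne_zero (G : SimpleGraph V) (c : G.ConnectedComponent) :
    Nat.card c.supp ≠ 0 := by
  rw [card_supp]
  simp only [ne_eq, Finset.card_eq_zero, Finset.filter_eq_empty_iff, not_forall]
  exact ⟨Quot.out c, mem_univ _, by simpa using mk_out c⟩

/-- Grouping the color monomial by connected components. -/
lemma colorMonomial_eq_sum_components {F : Finset (Sym2 V)} {f : V → ℕ+}
    (hf : ConstOn F f) :
    colorMonomial f =
      ∑ c : (SimpleGraph.fromEdgeSet (↑F : Set (Sym2 V))).ConnectedComponent,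
        Finsupp.single (f (Quot.out c)) (Nat.card c.supp) := by
  set G := SimpleGraph.fromEdgeSet (↑F : Set (Sym2 V)) with hG
  rw [colorMonomial, ← Finset.sum_fiberwise univ (fun v => G.connectedComponentMk v)
    (fun v => Finsupp.single (f v) 1)]
  refine Finset.sum_congr rfl fun c _ => ?_
  have h1 : ∀ v ∈ univ.filter (fun v => G.connectedComponentMk v = c),
      Finsupp.single (f v) 1 = Finsupp.single (f (Quot.out c)) 1 := by
    intro v hv
    rw [mem_filter] at hv
    rw [constOn_of_mk_eq hf (hv.2.trans (mk_out c).symm)]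
  rw [Finset.sum_congr rfl h1, Finset.sum_const, card_supp G c, Finsupp.smul_single,
    smul_eq_mul, mul_one]

/-- The set of colorings with a given monomial is finite. -/
lemma finite_colorings (d : ℕ+ →₀ ℕ) :
    {f : V → ℕ+ | colorMonomial f = d}.Finite := by
  refine Set.Finite.subset (Set.Finite.pi (fun _ : V => d.support.finite_toSet)) ?_
  intro f hf
  simp only [Set.mem_setOf_eq] at hf
  intro v _
  have h1 : (1 : ℕ) ≤ (colorMonomial f) (f v) := by
    rw [colorMonomial, Finsupp.finset_sum_apply]
    calc (1 : ℕ) = Finsupp.single (f v) 1 (f v) := by simp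
    _ ≤ _ := Finset.single_le_sum
      (f := fun u => (Finsupp.single (f u) 1 : ℕ+ →₀ ℕ) (f v))
      (fun u _ => Nat.zero_le _) (mem_univ v)
  have : f v ∈ d.support := by
    rw [Finsupp.mem_support_iff, ← hf]
    omega
  exact Finset.mem_coe.mpr this

/-- The finite set of colorings with monomial `d`. -/
def Tfin (V : Type*) [Fintype V] [DecidableEq V] (d : ℕ+ →₀ ℕ) : Finset (V → ℕ+) :=
  (finite_colorings (V := V) d).toFinset

lemma mem_Tfin {d : ℕ+ →₀ ℕ} {f : V → ℕ+} : f ∈ Tfin V d ↔ colorMonomial f = d := by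
  simp [Tfin]


variable (k : Type*) [CommRing k]

lemma coeff_powerSum (n : ℕ) (d : ℕ+ →₀ ℕ) :
    MvPowerSeries.coeff d (powerSum k n) =
      if ∃ j : ℕ+, d = Finsupp.single j n then 1 else 0 := rfl

lemma coeff_pLambda (F : Finset (Sym2 V)) (d : ℕ+ →₀ ℕ) :
    MvPowerSeries.coeff d (pLambda k F) =
      (((Tfin V d).filter (fun f => ConstOn F f)).card : k) := by
  set G := SimpleGraph.fromEdgeSet (↑F : Set (Sym2 V)) with hG
  rw [pLambda, finprod_eq_prod_of_fintype, MvPowerSeries.coeff_prod]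
  simp only [coeff_powerSum, Finset.prod_boole]
  trans (∑ l ∈ Finset.finsuppAntidiag (univ : Finset G.ConnectedComponent) d,
      if (∀ c ∈ (univ : Finset G.ConnectedComponent), ∃ j : ℕ+,
        l c = Finsupp.single j (Nat.card c.supp)) then (1:k) else 0)
  · exact Finset.sum_congr rfl (fun l _ => by split_ifs <;> rfl)
  rw [Finset.sum_boole]
  congr 1
  have hL : ∀ (f : V → ℕ+) (c : G.ConnectedComponent),
      (Finsupp.equivFunOnFinite.symm
        (fun c : G.ConnectedComponent =>
          Finsupp.single (f (Quot.out c)) (Nat.card c.supp))) c =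
        Finsupp.single (f (Quot.out c)) (Nat.card c.supp) := fun f c => rfl
  symm
  apply Finset.card_bij (fun f _ => Finsupp.equivFunOnFinite.symm
      (fun c : G.ConnectedComponent =>
        Finsupp.single (f (Quot.out c)) (Nat.card c.supp)))
  · intro f hf
    rw [Finset.mem_filter] at hf ⊢
    obtain ⟨hfT, hfC⟩ := hf
    refine ⟨?_, fun c _ => ⟨f (Quot.out c), hL f c⟩⟩
    rw [Finset.mem_finsuppAntidiag]
    refine ⟨?_, fun c _ => mem_univ c⟩
    rw [Finset.sum_congr rfl (fun c _ => hL f c),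
      ← colorMonomial_eq_sum_components hfC, mem_Tfin.mp hfT]
  · intro f1 hf1 f2 hf2 heq
    rw [Finset.mem_filter] at hf1 hf2
    funext v
    have h := congrArg (fun l => Finsupp.toFun l (G.connectedComponentMk v)) heq
    change Finsupp.single (f1 (Quot.out (G.connectedComponentMk v))) (Nat.card (G.connectedComponentMk v).supp) = Finsupp.single (f2 (Quot.out (G.connectedComponentMk v))) (Nat.card (G.connectedComponentMk v).supp) at h
    have h' : f1 (Quot.out (G.connectedComponentMk v))
        = f2 (Quot.out (G.connectedComponentMk v)) := by
      have hne := supp_card_ne_zero G (G.connectedComponentMk v)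
      exact (Finsupp.single_left_inj hne).mp h
    calc f1 v = f1 (Quot.out (G.connectedComponentMk v)) :=
          constOn_of_mk_eq hf1.2 (mk_out _).symm
      _ = f2 (Quot.out (G.connectedComponentMk v)) := h'
      _ = f2 v := constOn_of_mk_eq hf2.2 (mk_out _)
  · intro l hl
    rw [Finset.mem_filter] at hl
    obtain ⟨hanti, hP⟩ := hl
    rw [Finset.mem_finsuppAntidiag] at hanti
    choose j hj using fun c => hP c (mem_univ c)
    refine ⟨fun v => j (G.connectedComponentMk v), ?_, ?_⟩
    · have hCon : ConstOn F (fun v => j (G.connectedComponentMk v)) := by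
        intro u w huw
        by_cases h : u = w
        · subst h; rfl
        · have hadj : G.Adj u w := by
            rw [hG, SimpleGraph.fromEdgeSet_adj]
            exact ⟨by exact_mod_cast huw, h⟩
          exact congrArg j (SimpleGraph.ConnectedComponent.sound hadj.reachable)
      rw [Finset.mem_filter]
      refine ⟨mem_Tfin.mpr ?_, hCon⟩
      rw [colorMonomial_eq_sum_components hCon]
      rw [Finset.sum_congr rfl (fun c _ => ?_), hanti.1]
      show Finsupp.single (j (G.connectedComponentMk (Quot.out c))) (Nat.card c.supp) = l c
      rw [mk_out, ← hj c]
    · apply Finsupp.ext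
      intro c
      show Finsupp.single (j (G.connectedComponentMk (Quot.out c))) (Nat.card c.supp) = l c
      rw [mk_out, ← hj c]


lemma coeff_chromSym (E : Finset (Sym2 V)) (d : ℕ+ →₀ ℕ) :
    MvPowerSeries.coeff d (chromSym k E) =
      (((Tfin V d).filter (fun f => IsProperColoring E f)).card : k) := by
  show (chromSym k E) d = _
  rw [chromSym]
  have h : {f : V → ℕ+ | IsProperColoring E f ∧ colorMonomial f = d}
      = ↑((Tfin V d).filter (fun f => IsProperColoring E f)) := by
    ext f
    simp only [Set.mem_setOf_eq, Finset.coe_filter, mem_Tfin, and_comm]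
  rw [h, Set.ncard_coe_finset]

end Aux

theorem chromSym_eq_sum_powerset
    (k : Type*) [CommRing k] {V : Type*} [Fintype V] [DecidableEq V]
    (E : Finset (Sym2 V)) (hE : ∀ e ∈ E, ¬ e.IsDiag) :
    chromSym k E = ∑ F ∈ E.powerset, (-1 : k) ^ F.card • pLambda k F := by
  apply MvPowerSeries.ext
  intro d
  rw [map_sum]
  simp only [LinearMap.map_smul, smul_eq_mul, coeff_pLambda, coeff_chromSym]
  have hmono : ∀ (f : V → ℕ+) (F : Finset (Sym2 V)), F ∈ E.powerset →
      (ConstOn F f ↔ F ⊆ E.filter (fun e => ∀ u w : V, e = s(u, w) → f u = f w)) := by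
    intro f F hF
    rw [Finset.mem_powerset] at hF
    constructor
    · intro h e he
      rw [Finset.mem_filter]
      exact ⟨hF he, fun u w huw => h u w (huw ▸ he)⟩
    · intro h u w huw
      have h2 := h huw
      rw [Finset.mem_filter] at h2
      exact h2.2 u w rfl
  have step : ∀ F ∈ E.powerset,
      (-1:k)^F.card * (((Tfin V d).filter (fun f => ConstOn F f)).card : k)
      = ∑ f ∈ Tfin V d, if ConstOn F f then (-1:k)^F.card else 0 := by
    intro F _
    calc (-1:k)^F.card * (((Tfin V d).filter (fun f => ConstOn F f)).card : k)
        = ∑ _f ∈ (Tfin V d).filter (fun f => ConstOn F f), (-1:k)^F.card := by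
          rw [Finset.sum_const, nsmul_eq_mul, mul_comm]
      _ = ∑ f ∈ Tfin V d, if ConstOn F f then (-1:k)^F.card else 0 :=
          Finset.sum_filter _ _
  have inner : ∀ f ∈ Tfin V d,
      (∑ F ∈ E.powerset, if ConstOn F f then (-1:k)^F.card else 0)
      = if IsProperColoring E f then 1 else 0 := by
    intro f _
    set M := E.filter (fun e => ∀ u w : V, e = s(u, w) → f u = f w) with hM
    have h1 : ∀ F ∈ E.powerset, (if ConstOn F f then (-1:k)^F.card else 0)
        = if F ⊆ M then (-1:k)^F.card else 0 := by
      intro F hF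
      exact if_congr (hmono f F hF) rfl rfl
    rw [Finset.sum_congr rfl h1, ← Finset.sum_filter]
    have h2 : E.powerset.filter (fun F => F ⊆ M) = M.powerset := by
      ext F
      rw [Finset.mem_filter, Finset.mem_powerset, Finset.mem_powerset]
      constructor
      · exact fun h => h.2
      · exact fun h => ⟨h.trans (Finset.filter_subset _ _), h⟩
    rw [h2]
    have h4 : (∑ F ∈ M.powerset, (-1:k)^F.card) = if M = ∅ then 1 else 0 := by
      calc (∑ F ∈ M.powerset, (-1:k)^F.card)
          = ((∑ F ∈ M.powerset, (-1:ℤ)^F.card : ℤ) : k) := by push_cast; rfl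
        _ = ((if M = ∅ then 1 else 0 : ℤ) : k) := by
            rw [Finset.sum_powerset_neg_one_pow_card]
        _ = if M = ∅ then 1 else 0 := by split_ifs <;> simp
    rw [h4]
    have h5 : M = ∅ ↔ IsProperColoring E f := by
      rw [hM, Finset.filter_eq_empty_iff]
      constructor
      · intro h u w huw hfe
        refine h huw (fun u' w' he => ?_)
        rcases Sym2.eq_iff.mp he with ⟨ha, hb⟩ | ⟨ha, hb⟩
        · rw [← ha, ← hb]; exact hfe
        · rw [← ha, ← hb]; exact hfe.symm
      · intro hp e he hQ
        induction e using Sym2.ind with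
        | _ u w => exact hp u w he (hQ u w rfl)
    exact if_congr h5 rfl rfl
  rw [Finset.sum_congr rfl step, Finset.sum_comm, Finset.sum_congr rfl inner,
    Finset.sum_boole]
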